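/- arXiv:2206.11997 — 2 statements merged into one kernel-verified Lean document; each statement's English description precedes it below -/
import Mathlib

section
/- Let G be a compact metrizable group and Gₙ ≤ G closed subgroups converging to G in the Hausdorff metric on closed subsets of G (for any metric inducing the topology of G). Then the Haar probability measures of Gₙ, viewed as measures on G, converge weakly to the Haar probability measure of G. -/
open MeasureTheory Filter

/-- if closed subgroups `Gₙ` of a compact metrizable group `G`
converge to `G` in the Hausdorff metric, then their Haar probability measures
(pushed forward to `G`) converge weakly to the Haar probability measure of `G`. -/
theorem stmt8 {G : Type*} [Group G] [MetricSpace G] [CompactSpace G]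
    [IsTopologicalGroup G] [MeasurableSpace G] [BorelSpace G]
    (μG : Measure G) [μG.IsHaarMeasure] [IsProbabilityMeasure μG]
    (Gn : ℕ → Subgroup G) (hclosed : ∀ n, IsClosed (Gn n : Set G))
    (hconv : Tendsto (fun n => Metric.hausdorffDist ((Gn n : Set G)) (Set.univ : Set G))
      atTop (nhds 0))
    (μn : ∀ n, Measure (Gn n)) [∀ n, (μn n).IsHaarMeasure]
    [∀ n, IsProbabilityMeasure (μn n)] :
    ∀ f : C(G, ℝ),
      Tendsto (fun n => ∫ x, f x ∂(Measure.map ((↑) : Gn n → G) (μn n))) atTop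
        (nhds (∫ x, f x ∂μG)) := by
  intro f
  haveI : LocallyCompactSpace G := inferInstance
  -- μG is right invariant (compact group)
  haveI hri : μG.IsMulRightInvariant := by
    constructor
    intro g
    haveI : (Measure.map (· * g) μG).IsHaarMeasure :=
      Measure.isHaarMeasure_map_mul_right μG g
    haveI : IsProbabilityMeasure (Measure.map (· * g) μG) :=
      Measure.isProbabilityMeasure_map (measurable_mul_const g).aemeasurable
    exact Measure.isHaarMeasure_eq_of_isProbabilityMeasure _ μG
  rw [Metric.tendsto_atTop]
  intro ε hε
  -- uniform continuity of (g,x) ↦ f (g*x)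
  have hFc : Continuous (fun p : G × G => f (p.1 * p.2)) :=
    f.continuous.comp continuous_mul
  have hFu : UniformContinuous (fun p : G × G => f (p.1 * p.2)) :=
    CompactSpace.uniformContinuous_of_continuous hFc
  rw [Metric.uniformContinuous_iff] at hFu
  obtain ⟨δ, hδ, hδ'⟩ := hFu (ε / 2) (by positivity)
  obtain ⟨N, hN⟩ := (Metric.tendsto_atTop.1 hconv) δ hδ
  refine ⟨N, fun n hn => ?_⟩
  haveI : BorelSpace (Gn n) := Subtype.borelSpace _
  haveI : MeasurableMul (Gn n) := inferInstance
  set ν : Measure G := Measure.map ((↑) : Gn n → G) (μn n) with hν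
  haveI : IsProbabilityMeasure ν :=
    Measure.isProbabilityMeasure_map measurable_subtype_coe.aemeasurable
  -- any continuous function is ν-integrable (and μG-integrable)
  have hint : ∀ (μ : Measure G) [IsFiniteMeasure μ] (g : G → ℝ), Continuous g →
      Integrable g μ := by
    intro μ _ g hg
    exact hg.integrable_of_hasCompactSupport (HasCompactSupport.of_compactSpace _)
  -- key pointwise bound
  have key : ∀ g : G, ‖(∫ x, f x ∂ν) - ∫ x, f (g * x) ∂ν‖ ≤ ε / 2 := by
    intro g
    -- find h ∈ Gn n close to g
    have hne : (Gn n : Set G).Nonempty := ⟨1, (Gn n).one_mem⟩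
    have hfin : EMetric.hausdorffEdist (Set.univ : Set G) ((Gn n : Set G)) ≠ ⊤ :=
      Metric.hausdorffEdist_ne_top_of_nonempty_of_bounded Set.univ_nonempty hne
        isCompact_univ.isBounded (((hclosed n).isCompact).isBounded)
    have hd : Metric.hausdorffDist (Set.univ : Set G) ((Gn n : Set G)) < δ := by
      rw [Metric.hausdorffDist_comm]
      have := hN n hn
      rw [Real.dist_eq, sub_zero] at this
      exact lt_of_le_of_lt (le_abs_self _) this
    obtain ⟨h, hhmem, hgh⟩ :=
      Metric.exists_dist_lt_of_hausdorffDist_lt (Set.mem_univ g) hd hfin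
    -- invariance: ∫ f (h * x) dν = ∫ f dν
    have hinv : ∫ x, f ((h : G) * x) ∂ν = ∫ x, f x ∂ν := by
      have e1 : ∫ x, f ((h : G) * x) ∂ν = ∫ y : Gn n, f ((h : G) * (y : G)) ∂(μn n) :=
        integral_map measurable_subtype_coe.aemeasurable
          (f.continuous.comp (continuous_mul_left (h : G))).aestronglyMeasurable
      have e2 : ∫ x, f x ∂ν = ∫ y : Gn n, f (y : G) ∂(μn n) :=
        integral_map measurable_subtype_coe.aemeasurable f.continuous.aestronglyMeasurable
      rw [e1, e2]
      have e3 : ∀ y : Gn n, f ((h : G) * (y : G)) =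
          (fun z : Gn n => f (z : G)) ((⟨h, hhmem⟩ : Gn n) * y) := fun y => rfl
      simp_rw [e3]
      exact integral_mul_left_eq_self (μ := μn n) (fun z : Gn n => f (z : G)) ⟨h, hhmem⟩
    rw [← hinv]
    have hi1 : Integrable (fun x => f ((h : G) * x)) ν :=
      hint ν _ (f.continuous.comp (continuous_mul_left h))
    have hi2 : Integrable (fun x => f (g * x)) ν :=
      hint ν _ (f.continuous.comp (continuous_mul_left g))
    rw [← integral_sub hi1 hi2]
    have hb : ∀ x : G, ‖f ((h : G) * x) - f (g * x)‖ ≤ ε / 2 := by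
      intro x
      have hdp : dist ((h : G), x) (g, x) < δ := by
        rw [Prod.dist_eq]
        simp only [dist_self]
        rw [max_eq_left dist_nonneg, dist_comm]
        exact hgh
      have := hδ' hdp
      rw [dist_eq_norm] at this
      exact le_of_lt this
    calc ‖∫ x, (f ((h : G) * x) - f (g * x)) ∂ν‖
        ≤ ε / 2 * (ν Set.univ).toReal :=
          norm_integral_le_of_norm_le_const (Filter.Eventually.of_forall hb)
      _ = ε / 2 := by simp [measure_univ]
  -- Fubini computation
  have hInt : Integrable (fun p : G × G => f (p.1 * p.2)) (μG.prod ν) :=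
    hFc.integrable_of_hasCompactSupport (HasCompactSupport.of_compactSpace _)
  have hswap : ∫ g, ∫ x, f (g * x) ∂ν ∂μG = ∫ x, ∫ g, f (g * x) ∂μG ∂ν :=
    integral_integral_swap hInt
  have hA : ∫ g, ∫ x, f (g * x) ∂ν ∂μG = ∫ x, f x ∂μG := by
    rw [hswap]
    have : ∀ x : G, ∫ g, f (g * x) ∂μG = ∫ g, f g ∂μG := fun x =>
      integral_mul_right_eq_self (fun g => f g) x
    simp_rw [this]
    simp [measure_univ]
  -- integrability of the parametric integral
  have hIpar : Integrable (fun g => ∫ x, f (g * x) ∂ν) μG := hInt.integral_prod_left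
  have hB : (∫ x, f x ∂ν) - ∫ x, f x ∂μG
      = ∫ g, ((∫ x, f x ∂ν) - ∫ x, f (g * x) ∂ν) ∂μG := by
    rw [integral_sub (integrable_const _) hIpar, integral_const, hA]
    simp [measure_univ]
  rw [dist_eq_norm, hB]
  calc ‖∫ g, ((∫ x, f x ∂ν) - ∫ x, f (g * x) ∂ν) ∂μG‖
      ≤ ε / 2 * (μG Set.univ).toReal :=
        norm_integral_le_of_norm_le_const (Filter.Eventually.of_forall key)
    _ = ε / 2 := by simp [measure_univ]
    _ < ε := by linarith
end

section
/- The circle group S¹ is not image-rigid: the images of the homomorphisms φₙ : S¹ → T², z ↦ (z, zⁿ), converge in the Hausdorff metric on closed subgroups of the 2-torus T² to all of T², but T² is not the image of any continuous homomorphism S¹ → T². -/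
open Filter

/-! Auxiliary lemmas -/

private lemma abs_exp_mul_I_sub_one_le (t : ℝ) :
    ‖Complex.exp (t * Complex.I) - 1‖ ≤ |t| := by
  have hre : (Complex.exp (t * Complex.I) - 1).re = Real.cos t - 1 := by
    simp [Complex.exp_ofReal_mul_I_re]
  have him : (Complex.exp (t * Complex.I) - 1).im = Real.sin t := by
    simp [Complex.exp_ofReal_mul_I_im]
  have hsin : |Real.sin (t / 2)| ≤ |t / 2| := Real.abs_sin_le_abs
  have hsin2 : Real.sin (t / 2) ^ 2 ≤ (t / 2) ^ 2 := by
    nlinarith [abs_nonneg (t / 2), abs_nonneg (Real.sin (t / 2)), sq_abs (t / 2),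
      sq_abs (Real.sin (t / 2))]
  have hcos : Real.cos t = 1 - 2 * Real.sin (t / 2) ^ 2 := by
    have h := Real.cos_two_mul (t / 2)
    have h2 : Real.sin (t / 2) ^ 2 + Real.cos (t / 2) ^ 2 = 1 := Real.sin_sq_add_cos_sq _
    have ht : 2 * (t / 2) = t := by ring
    rw [ht] at h
    nlinarith
  have hnormsq : Complex.normSq (Complex.exp (t * Complex.I) - 1) ≤ t ^ 2 := by
    rw [Complex.normSq_apply, hre, him]
    have h2 : Real.sin t ^ 2 + Real.cos t ^ 2 = 1 := Real.sin_sq_add_cos_sq _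
    nlinarith
  rw [Complex.norm_def]
  calc Real.sqrt (Complex.normSq (Complex.exp (t * Complex.I) - 1))
      ≤ Real.sqrt (t ^ 2) := Real.sqrt_le_sqrt hnormsq
    _ = |t| := Real.sqrt_sq_eq_abs t

private lemma circle_dist_coe (x y : Circle) : dist x y = dist (x : ℂ) (y : ℂ) := rfl

private lemma circle_dist_exp (s t : ℝ) :
    dist (Circle.exp s) (Circle.exp t) ≤ |s - t| := by
  have h : dist (Circle.exp s) (Circle.exp t)
      = ‖Complex.exp (s * Complex.I) - Complex.exp (t * Complex.I)‖ := by
    rw [circle_dist_coe, Complex.dist_eq, Circle.coe_exp, Circle.coe_exp]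
  rw [h]
  have hfac : Complex.exp ((s : ℂ) * Complex.I) - Complex.exp ((t : ℂ) * Complex.I)
      = Complex.exp ((t : ℂ) * Complex.I) * (Complex.exp (((s - t : ℝ) : ℂ) * Complex.I) - 1) := by
    rw [mul_sub, ← Complex.exp_add, mul_one]
    push_cast
    ring_nf
  rw [hfac, norm_mul, Complex.norm_exp_ofReal_mul_I, one_mul]
  exact abs_exp_mul_I_sub_one_le _

private lemma circle_exp_zpow (t : ℝ) (n : ℤ) :
    Circle.exp t ^ n = Circle.exp (n * t) := by
  induction n using Int.induction_on with
  | zero => simp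
  | succ k ih =>
      rw [zpow_add_one, ih]
      push_cast
      rw [add_mul, one_mul, Circle.exp_add]
  | pred k ih =>
      rw [zpow_sub_one, ih]
      push_cast
      rw [sub_mul, one_mul, Circle.exp_sub, div_eq_mul_inv]

private lemma circle_exp_pow (t : ℝ) (n : ℕ) :
    Circle.exp t ^ n = Circle.exp (n * t) := by
  have h := circle_exp_zpow t (n : ℤ)
  rwa [zpow_natCast, Int.cast_natCast] at h

private instance : Infinite Circle := by
  refine Infinite.of_injective (fun n : ℕ => Circle.exp (1 / (n + 1))) ?_
  have hpi : (1 : ℝ) < Real.pi := by linarith [Real.pi_gt_three]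
  intro a b hab
  have hab' : Circle.exp (1 / (a + 1)) = Circle.exp (1 / (b + 1)) := hab
  have hmem : ∀ n : ℕ, (0 : ℝ) < 1 / (n + 1) ∧ (1 : ℝ) / (n + 1) ≤ 1 := by
    intro n
    constructor
    · positivity
    · rw [div_le_one (by positivity)]
      linarith [(Nat.cast_nonneg n : (0 : ℝ) ≤ n)]
  have harg : ∀ n : ℕ, Complex.arg (Circle.exp (1 / (n + 1)) : ℂ) = 1 / (n + 1) := by
    intro n
    exact Circle.arg_exp (by linarith [(hmem n).1]) (by linarith [(hmem n).2])
  have h1 : (1 : ℝ) / (a + 1) = 1 / (b + 1) := by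
    rw [← harg a, ← harg b, hab']
  have h2 : ((a : ℝ) + 1)⁻¹ = ((b : ℝ) + 1)⁻¹ := by
    rw [← one_div, ← one_div, h1]
  have h3 : (a : ℝ) + 1 = (b : ℝ) + 1 :=
    inv_injective h2
  exact_mod_cast add_left_injective 1 h3

/-- An infinite closed subgroup of the circle is everything. -/
private lemma closed_subgroup_infinite_eq_univ (K : Subgroup Circle)
    (hc : IsClosed (K : Set Circle)) (hinf : (K : Set Circle).Infinite) :
    (K : Set Circle) = Set.univ := by
  -- Step 1: elements of K \ {1} arbitrarily close to 1
  have hsmall : ∀ ε : ℝ, 0 < ε → ∃ g : Circle, g ∈ K ∧ g ≠ 1 ∧ dist (g : Circle) 1 < ε := by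
    intro ε hε
    obtain ⟨x, hx⟩ := hinf.exists_accPt_principal
    obtain ⟨k, hkball, hkne⟩ :=
      (accPt_iff_nhds).1 hx (Metric.ball x ε) (Metric.ball_mem_nhds x hε)
    have hxK : x ∈ K := by
      have hx' : x ∈ closure (K : Set Circle) := by
        rw [Metric.mem_closure_iff]
        intro δ hδ
        obtain ⟨y, hyball, _⟩ :=
          (accPt_iff_nhds).1 hx (Metric.ball x δ) (Metric.ball_mem_nhds x hδ)
        exact ⟨y, hyball.2, by rw [dist_comm]; exact hyball.1⟩
      rwa [hc.closure_eq] at hx'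
    refine ⟨k * x⁻¹, mul_mem hkball.2 (inv_mem hxK), ?_, ?_⟩
    · simpa [mul_inv_eq_one] using hkne
    · have hco : dist (k * x⁻¹) (1 : Circle) = dist (k : ℂ) (x : ℂ) := by
        rw [circle_dist_coe, Complex.dist_eq, Complex.dist_eq]
        push_cast
        rw [show (k : ℂ) * (x : ℂ)⁻¹ - 1 = ((k : ℂ) - x) * (x : ℂ)⁻¹ by
          field_simp]
        rw [norm_mul, norm_inv, Circle.norm_coe, inv_one, mul_one]
      rw [hco, ← circle_dist_coe]
      exact Metric.mem_ball.mp hkball.1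
  -- Step 2: elements with small nonzero argument
  have hargsmall : ∀ ε : ℝ, 0 < ε → ∃ g : Circle, g ∈ K ∧ Complex.arg (g : ℂ) ≠ 0 ∧
      |Complex.arg (g : ℂ)| < ε := by
    intro ε hε
    have hca : ContinuousAt Complex.arg (1 : ℂ) :=
      Complex.continuousAt_arg Complex.one_mem_slitPlane
    rw [Metric.continuousAt_iff] at hca
    obtain ⟨δ, hδ, hδ'⟩ := hca ε hε
    obtain ⟨g, hgK, hg1, hgd⟩ := hsmall δ hδ
    refine ⟨g, hgK, ?_, ?_⟩
    · intro h0
      apply hg1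
      have h := Circle.exp_arg g
      rw [h0, Circle.exp_zero] at h
      exact h.symm
    · have hgd' : dist (g : ℂ) (1 : ℂ) < δ := by
        rwa [circle_dist_coe] at hgd
      have h := hδ' hgd'
      rwa [Complex.arg_one, Real.dist_eq, sub_zero] at h
  -- Step 3: density
  ext w
  simp only [Set.mem_univ, iff_true, SetLike.mem_coe]
  have hw : w ∈ closure (K : Set Circle) := by
    rw [Metric.mem_closure_iff]
    intro ε hε
    obtain ⟨g, hgK, hδ0, hδε⟩ := hargsmall ε hε
    set δ := Complex.arg (g : ℂ) with hδ
    set s := Complex.arg (w : ℂ) with hs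
    set n : ℤ := ⌊s / δ⌋ with hn
    refine ⟨g ^ n, zpow_mem hgK n, ?_⟩
    have hb : g ^ n = Circle.exp (n * δ) := by
      rw [← Circle.exp_arg g, ← hδ, circle_exp_zpow]
    have hww : w = Circle.exp s := (Circle.exp_arg w).symm
    rw [hb]
    nth_rewrite 1 [hww]
    calc dist (Circle.exp s) (Circle.exp (n * δ)) ≤ |s - n * δ| := circle_dist_exp _ _
      _ ≤ |δ| := by
          have h1 : (n : ℝ) ≤ s / δ := Int.floor_le _
          have h2 : s / δ < n + 1 := Int.lt_floor_add_one _
          have habs : |s / δ - n| ≤ 1 := by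
            rw [abs_le]; constructor <;> linarith
          have heq : s - n * δ = δ * (s / δ - n) := by
            field_simp
          rw [heq, abs_mul]
          calc |δ| * |s / δ - (n : ℝ)| ≤ |δ| * 1 :=
                mul_le_mul_of_nonneg_left habs (abs_nonneg _)
            _ = |δ| := mul_one _
      _ < ε := hδε
  rwa [hc.closure_eq, SetLike.mem_coe] at hw

/-- the circle is not image-rigid: the images of `z ↦ (z, zⁿ)`
converge in the Hausdorff metric to the whole 2-torus `T² = S¹ × S¹`, yet `T²` is
not the image of any continuous homomorphism from `S¹`. -/
theorem stmt15 :
    Tendsto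
      (fun n : ℕ => Metric.hausdorffDist
        (Set.range fun z : Circle => ((z, z ^ n) : Circle × Circle))
        (Set.univ : Set (Circle × Circle)))
      atTop (nhds 0) ∧
    ¬ ∃ φ : Circle →* Circle × Circle, Continuous φ ∧ Function.Surjective φ := by
  constructor
  · -- Part 1: Hausdorff convergence
    apply tendsto_of_tendsto_of_tendsto_of_le_of_le' tendsto_const_nhds
      (tendsto_const_div_atTop_nhds_zero_nat Real.pi)
    · exact Eventually.of_forall fun n => Metric.hausdorffDist_nonneg
    · filter_upwards [eventually_ge_atTop 1] with n hn
      have hn0 : (n : ℝ) ≠ 0 := by positivity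
      have hnpos : (0 : ℝ) < n := by positivity
      have hπn : 0 ≤ Real.pi / n := by positivity
      apply Metric.hausdorffDist_le_of_mem_dist hπn
      · intro x hx
        exact ⟨x, Set.mem_univ x, by simpa using hπn⟩
      · rintro ⟨a, b⟩ -
        set θ := Complex.arg ((b / a ^ n : Circle) : ℂ) with hθ
        set z := a * Circle.exp (θ / n) with hz
        refine ⟨(z, z ^ n), Set.mem_range_self z, ?_⟩
        have hzn : z ^ n = b := by
          rw [hz, mul_pow, circle_exp_pow]
          rw [show (n : ℝ) * (θ / n) = θ by field_simp]
          rw [hθ, Circle.exp_arg]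
          simp
        rw [Prod.dist_eq, hzn]
        simp only [dist_self]
        have hda : dist z a ≤ Real.pi / n := by
          have heq : dist z a = dist (Circle.exp (θ / n)) (1 : Circle) := by
            rw [hz, circle_dist_coe, circle_dist_coe, Complex.dist_eq, Complex.dist_eq,
              Circle.coe_mul, Circle.coe_one]
            rw [show (a : ℂ) * (Circle.exp (θ / n) : ℂ) - a
                = (a : ℂ) * ((Circle.exp (θ / n) : ℂ) - 1) by ring]
            rw [norm_mul, Circle.norm_coe, one_mul]
          rw [heq]
          calc dist (Circle.exp (θ / n)) (1 : Circle)
              = dist (Circle.exp (θ / n)) (Circle.exp 0) := by rw [Circle.exp_zero]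
            _ ≤ |θ / n - 0| := circle_dist_exp _ _
            _ = |θ| / n := by rw [sub_zero, abs_div, Nat.abs_cast]
            _ ≤ Real.pi / n := by
                gcongr
                exact Complex.abs_arg_le_pi _
        rw [dist_comm a z]
        exact max_le hda hπn
  · -- Part 2: no continuous surjective homomorphism
    rintro ⟨φ, hφc, hφs⟩
    set L : Subgroup Circle := (Subgroup.prod ⊥ ⊤).comap φ with hL
    have hLmem : ∀ z : Circle, z ∈ L ↔ (φ z).1 = 1 := by
      intro z
      simp [hL, Subgroup.mem_comap, Subgroup.mem_prod]
    have hLc : IsClosed (L : Set Circle) := by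
      have hset : (L : Set Circle) = (fun z => (φ z).1) ⁻¹' {1} := by
        ext z; simpa using hLmem z
      rw [hset]
      exact IsClosed.preimage (continuous_fst.comp hφc) isClosed_singleton
    by_cases hfin : (L : Set Circle).Finite
    · -- finite case: Circle injects into L
      have hex : ∀ b : Circle, ∃ z, φ z = (1, b) := fun b => hφs (1, b)
      choose f hf using hex
      have hfL : ∀ b, f b ∈ L := fun b => (hLmem (f b)).2 (by rw [hf b])
      have hLfin : Finite (L : Set Circle) := hfin.to_subtype
      have hinj : Function.Injective (fun b : Circle => (⟨f b, hfL b⟩ : (L : Set Circle))) := by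
        intro a b hab
        have h1 : f a = f b := congrArg Subtype.val hab
        have h2 : ((1 : Circle), a) = ((1 : Circle), b) := by rw [← hf a, ← hf b, h1]
        exact congrArg Prod.snd h2
      have hfinC : Finite Circle := Finite.of_injective _ hinj
      exact not_finite Circle
    · -- infinite case: L = everything
      have hLuniv := closed_subgroup_infinite_eq_univ L hLc hfin
      obtain ⟨z, hz⟩ := hφs (Circle.exp Real.pi, 1)
      have hzL : z ∈ L := by
        rw [← SetLike.mem_coe, hLuniv]; exact Set.mem_univ z
      have h1 : (φ z).1 = 1 := (hLmem z).1 hzL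
      rw [hz] at h1
      have h1' : Circle.exp Real.pi = 1 := h1
      have hcoe : (Circle.exp Real.pi : ℂ) = 1 := by rw [h1', Circle.coe_one]
      rw [Circle.coe_exp, Complex.exp_pi_mul_I] at hcoe
      norm_num at hcoe
end
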